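/- Suppose the penalty function g satisfies Assumption 3. Then for every λ > 0, the penalized problem min_θ f(θ) + λ g(θ) attains its infimum: there exists a CP parameter θ̂ with f(θ̂) + λ g(θ̂) = inf_θ {f(θ) + λ g(θ)}. -/

import Mathlib

open scoped BigOperators
open Filter Matrix

noncomputable section

/-- The coefficient tensor `∑_{r<R} β_{1,r} ∘ ⋯ ∘ β_{D,r}` built from a CP parameter. -/
def cpDecomp {D : ℕ} {p : Fin D → ℕ} (R : ℕ) (β : Fin R → ∀ d : Fin D, Fin (p d) → ℝ) :
    (∀ d : Fin D, Fin (p d)) → ℝ :=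
  fun i => ∑ r : Fin R, ∏ d : Fin D, β r d (i d)

/-- CP rank of an order-`D` tensor. -/
def cpRank {D : ℕ} {p : Fin D → ℕ} (A : (∀ d : Fin D, Fin (p d)) → ℝ) : ℕ :=
  sInf {R : ℕ | ∃ β : Fin R → ∀ d : Fin D, Fin (p d) → ℝ, A = cpDecomp R β}

/-- Frobenius norm of a tensor. -/
def frob {D : ℕ} {p : Fin D → ℕ} (A : (∀ d : Fin D, Fin (p d)) → ℝ) : ℝ :=
  Real.sqrt (∑ i, (A i) ^ 2)

/-- The squared loss `f(θ) = ∑ᵢ (yᵢ − ⟨∑ᵣ β_{1,r}∘⋯∘β_{D,r}, Xᵢ⟩)²` of a CP parameter. -/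
def floss {D n : ℕ} {p : Fin D → ℕ} (R : ℕ) (y : Fin n → ℝ)
    (X : Fin n → (∀ d : Fin D, Fin (p d)) → ℝ)
    (θ : Fin R → ∀ d : Fin D, Fin (p d) → ℝ) : ℝ :=
  ∑ i, (y i - ∑ j, cpDecomp R θ j * X i j) ^ 2

/-- The magnitude `M(θ) = ∑ᵣ ∏_d ‖β_{d,r}‖` of a CP parameter. -/
def mag {D R : ℕ} {p : Fin D → ℕ} (θ : Fin R → ∀ d : Fin D, Fin (p d) → ℝ) : ℝ :=
  ∑ r : Fin R, ∏ d : Fin D, Real.sqrt (∑ l, θ r d l ^ 2)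

/-- The Euclidean norm `‖θ‖` of a CP parameter, viewed as one long vector. -/
def thetaNorm {D R : ℕ} {p : Fin D → ℕ} (θ : Fin R → ∀ d : Fin D, Fin (p d) → ℝ) : ℝ :=
  Real.sqrt (∑ r : Fin R, ∑ d : Fin D, ∑ l, θ r d l ^ 2)

lemma cpDecomp_continuous {D : ℕ} {p : Fin D → ℕ} (R : ℕ) (j : ∀ d : Fin D, Fin (p d)) :
    Continuous fun θ : Fin R → ∀ d : Fin D, Fin (p d) → ℝ => cpDecomp R θ j := by
  unfold cpDecomp
  exact continuous_finset_sum _ fun r _ => continuous_finset_prod _ fun d _ =>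
    (continuous_apply (j d)).comp ((continuous_apply d).comp (continuous_apply r))

lemma floss_continuous {D n : ℕ} {p : Fin D → ℕ} (R : ℕ) (y : Fin n → ℝ)
    (X : Fin n → (∀ d : Fin D, Fin (p d)) → ℝ) :
    Continuous fun θ : Fin R → ∀ d : Fin D, Fin (p d) → ℝ => floss R y X θ := by
  unfold floss
  exact continuous_finset_sum _ fun i _ =>
    (continuous_const.sub (continuous_finset_sum _ fun j _ =>
      (cpDecomp_continuous R j).mul continuous_const)).pow 2

lemma floss_nonneg {D n : ℕ} {p : Fin D → ℕ} (R : ℕ) (y : Fin n → ℝ)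
    (X : Fin n → (∀ d : Fin D, Fin (p d)) → ℝ)
    (θ : Fin R → ∀ d : Fin D, Fin (p d) → ℝ) : 0 ≤ floss R y X θ :=
  Finset.sum_nonneg fun _ _ => sq_nonneg _

lemma abs_le_thetaNorm {D R : ℕ} {p : Fin D → ℕ}
    (θ : Fin R → ∀ d : Fin D, Fin (p d) → ℝ) (r : Fin R) (d : Fin D) (l : Fin (p d)) :
    |θ r d l| ≤ thetaNorm θ := by
  rw [thetaNorm, ← Real.sqrt_sq_eq_abs]
  apply Real.sqrt_le_sqrt
  calc θ r d l ^ 2 ≤ ∑ l', θ r d l' ^ 2 :=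
        Finset.single_le_sum (f := fun l' => θ r d l' ^ 2) (fun _ _ => sq_nonneg _) (Finset.mem_univ l)
    _ ≤ ∑ d', ∑ l', θ r d' l' ^ 2 :=
        Finset.single_le_sum (f := fun d' => ∑ l', θ r d' l' ^ 2)
          (fun _ _ => Finset.sum_nonneg fun _ _ => sq_nonneg _) (Finset.mem_univ d)
    _ ≤ ∑ r', ∑ d', ∑ l', θ r' d' l' ^ 2 :=
        Finset.single_le_sum (f := fun r' => ∑ d', ∑ l', θ r' d' l' ^ 2)
          (fun _ _ => Finset.sum_nonneg fun _ _ => Finset.sum_nonneg fun _ _ => sq_nonneg _)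
          (Finset.mem_univ r)


/-- if the penalty `g` satisfies Assumption 3, then for every `λ > 0` the
penalized problem `min_θ f(θ) + λ g(θ)` attains its infimum. -/
theorem stmt9 {D n R : ℕ} {p : Fin D → ℕ} (hR : 1 ≤ R)
    (y : Fin n → ℝ) (X : Fin n → (∀ d : Fin D, Fin (p d)) → ℝ)
    (g : (Fin R → ∀ d : Fin D, Fin (p d) → ℝ) → ℝ)
    -- Assumption 3: g continuous, with
    (hg_cont : Continuous g)
    -- (i) g(0) < ∞ (trivial for real-valued g)
    (hg1 : ∃ c : ℝ, g 0 ≤ c)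
    -- (ii) g(θ_t) → ∞ whenever M(θ_t) → ∞
    (hg2 : ∀ θseq : ℕ → Fin R → ∀ d : Fin D, Fin (p d) → ℝ,
      Tendsto (fun t => mag (θseq t)) atTop atTop →
      Tendsto (fun t => g (θseq t)) atTop atTop)
    -- (iii) bounded-magnitude sequences can be re-represented boundedly without
    -- increasing the penalty
    (hg3 : ∀ (S₁ : ℝ) (θseq : ℕ → Fin R → ∀ d : Fin D, Fin (p d) → ℝ),
      (∀ t, mag (θseq t) ≤ S₁) →
      ∃ (θseq' : ℕ → Fin R → ∀ d : Fin D, Fin (p d) → ℝ) (S₂ : ℝ), ∀ t,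
        cpDecomp R (θseq' t) = cpDecomp R (θseq t) ∧ mag (θseq' t) ≤ S₁ ∧
        g (θseq' t) ≤ g (θseq t) ∧ thetaNorm (θseq' t) ≤ S₂)
    (lam : ℝ) (hlam : 0 < lam) :
    ∃ θhat : Fin R → ∀ d : Fin D, Fin (p d) → ℝ,
      ∀ θ : Fin R → ∀ d : Fin D, Fin (p d) → ℝ,
        floss R y X θhat + lam * g θhat ≤ floss R y X θ + lam * g θ := by
  classical
  set F : (Fin R → ∀ d : Fin D, Fin (p d) → ℝ) → ℝ :=
    fun θ => floss R y X θ + lam * g θ with hF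
  have hFθ : ∀ θ, lam * g θ ≤ F θ := fun θ =>
    le_add_of_nonneg_left (floss_nonneg R y X θ)
  -- Claim A: sublevel sets of g have bounded magnitude
  have claimA : ∀ C : ℝ, ∃ S₁ : ℝ, ∀ θ, g θ ≤ C → mag θ ≤ S₁ := by
    intro C
    by_contra h
    push_neg at h
    choose θ hθg hθm using fun t : ℕ => h (t : ℝ)
    have hmag : Tendsto (fun t => mag (θ t)) atTop atTop :=
      tendsto_atTop_mono (fun t => (hθm t).le) tendsto_natCast_atTop_atTop
    obtain ⟨t, ht⟩ := ((hg2 θ hmag).eventually (eventually_gt_atTop C)).exists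
    exact absurd (hθg t) (not_le.mpr ht)
  -- membership in compact ball from thetaNorm bound
  have ball_mem : ∀ (S₂ : ℝ) (θ' : Fin R → ∀ d : Fin D, Fin (p d) → ℝ), thetaNorm θ' ≤ S₂ →
      θ' ∈ Metric.closedBall (0 : Fin R → ∀ d : Fin D, Fin (p d) → ℝ) (max S₂ 0) := by
    intro S₂ θ' hn
    rw [Metric.mem_closedBall]
    refine (dist_pi_le_iff (le_max_right _ _)).2 fun r => ?_
    refine (dist_pi_le_iff (le_max_right _ _)).2 fun d => ?_
    refine (dist_pi_le_iff (le_max_right _ _)).2 fun l => ?_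
    simp only [Pi.zero_apply, Real.dist_eq, sub_zero]
    exact le_max_of_le_left ((abs_le_thetaNorm θ' r d l).trans hn)
  have hKcpct : ∀ S : ℝ,
      IsCompact (Metric.closedBall (0 : Fin R → ∀ d : Fin D, Fin (p d) → ℝ) S) :=
    fun S => isCompact_closedBall _ _
  -- F is bounded below
  have hbdd : BddBelow (Set.range F) := by
    by_contra hnb
    rw [not_bddBelow_iff] at hnb
    have hex : ∀ t : ℕ, ∃ θ, F θ < -(t : ℝ) * lam := by
      intro t
      obtain ⟨yv, ⟨θ, rfl⟩, hy⟩ := hnb (-(t : ℝ) * lam)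
      exact ⟨θ, hy⟩
    choose θ hθ using hex
    have hg0 : ∀ t : ℕ, g (θ t) ≤ -(t : ℝ) := by
      intro t
      have h1 : lam * g (θ t) < lam * (-(t : ℝ)) := by
        have := (hFθ (θ t)).trans_lt (hθ t); linarith
      exact ((mul_lt_mul_iff_right₀ hlam).mp h1).le
    have hg0' : ∀ t, g (θ t) ≤ 0 := fun t =>
      (hg0 t).trans (neg_nonpos.mpr (Nat.cast_nonneg t))
    obtain ⟨S₁, hS₁⟩ := claimA 0
    obtain ⟨θ', S₂, hθ'⟩ := hg3 S₁ θ (fun t => hS₁ _ (hg0' t))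
    obtain ⟨θ₀, hθ₀K, hmin⟩ := (hKcpct (max S₂ 0)).exists_isMinOn
      ⟨θ' 0, ball_mem S₂ (θ' 0) (hθ' 0).2.2.2⟩ hg_cont.continuousOn
    obtain ⟨t, ht⟩ := exists_nat_gt (-(g θ₀))
    have h1 : g θ₀ ≤ g (θ' t) := hmin (ball_mem S₂ (θ' t) (hθ' t).2.2.2)
    have h2 : g (θ' t) ≤ g (θ t) := (hθ' t).2.2.1
    have h3 := hg0 t
    linarith
  set m := sInf (Set.range F) with hm
  have hex : ∀ t : ℕ, ∃ θ, F θ < m + 1 / ((t : ℝ) + 1) := by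
    intro t
    have hlt : m < m + 1 / ((t : ℝ) + 1) := lt_add_of_pos_right _ (by positivity)
    obtain ⟨yv, ⟨θ, rfl⟩, hy⟩ := exists_lt_of_csInf_lt (Set.range_nonempty F) hlt
    exact ⟨θ, hy⟩
  choose θ hθ using hex
  have hgC : ∀ t, g (θ t) ≤ (m + 1) / lam := by
    intro t
    have ht1 : 1 / ((t : ℝ) + 1) ≤ 1 := by
      rw [div_le_one (by positivity)]
      have : (0 : ℝ) ≤ (t : ℝ) := Nat.cast_nonneg t
      linarith
    have h1 : F (θ t) < m + 1 := (hθ t).trans_le (by linarith)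
    have h2 := hFθ (θ t)
    rw [le_div_iff₀ hlam, mul_comm]
    linarith
  obtain ⟨S₁, hS₁⟩ := claimA ((m + 1) / lam)
  obtain ⟨θ', S₂, hθ'⟩ := hg3 S₁ θ (fun t => hS₁ _ (hgC t))
  have hFcont : Continuous F := (floss_continuous R y X).add (continuous_const.mul hg_cont)
  obtain ⟨θhat, hθhatK, hmin⟩ := (hKcpct (max S₂ 0)).exists_isMinOn
    ⟨θ' 0, ball_mem S₂ (θ' 0) (hθ' 0).2.2.2⟩ hFcont.continuousOn
  have key : ∀ t : ℕ, F θhat < m + 1 / ((t : ℝ) + 1) := by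
    intro t
    have h1 : F θhat ≤ F (θ' t) := hmin (ball_mem S₂ (θ' t) (hθ' t).2.2.2)
    have hfe : floss R y X (θ' t) = floss R y X (θ t) := by
      unfold floss; rw [(hθ' t).1]
    have h2 : F (θ' t) ≤ F (θ t) := by
      simp only [hF]
      rw [hfe]
      exact add_le_add_right (mul_le_mul_of_nonneg_left (hθ' t).2.2.1 hlam.le) _
    exact h1.trans_lt (h2.trans_lt (hθ t))
  have hFhat : F θhat ≤ m := by
    refine le_of_forall_pos_le_add fun ε hε => ?_
    obtain ⟨t, ht⟩ := exists_nat_one_div_lt hε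
    refine (key t).le.trans (add_le_add_right ?_ m)
    exact ht.le
  refine ⟨θhat, fun θ₁ => ?_⟩
  have h1 : m ≤ F θ₁ := csInf_le hbdd (Set.mem_range_self θ₁)
  have := hFhat.trans h1
  simpa [hF] using this
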